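/- arXiv:2308.06184 — 9 statements merged into one kernel-verified Lean document; each statement's English description precedes it below -/
import Mathlib

section
/- Define, for (s,t) ∈ ℝ × (0,1), the functions ξ₁(t) = √((1−t)/t), ξ₂(t) = √(t/(1−t)) and f(s,t) = 2·s·√(t·(1−t)). Then for every (s,t) ∈ ℝ × (0,1): the function s ↦ f(s,t) has derivative at s equal to ξ₁(t)·t + ξ₂(t)·(1−t) (namely 2·√(t(1−t))), and the function t ↦ f(s,t) has derivative at t equal to ξ₁(t)·s − ξ₂(t)·s (namely s·(1−2t)/√(t(1−t))). Since the base coordinates x₁(s,t) = s·t, x₂(s,t) = s·(1−t) have partial derivatives ∂x₁/∂s = t, ∂x₂/∂s = 1−t, ∂x₁/∂t = s, ∂x₂/∂t = −s, this says exactly that the crossing model i_×(s,t) = (st, s(1−t), √((1−t)/t), √(t/(1−t))) of the conjugate surface is an exact Lagrangian parametrization with primitive f. -/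
/-- The crossing model of the conjugate surface is an exact Lagrangian
parametrization with primitive `f(s,t) = 2·s·√(t(1−t))`: for `(s,t) ∈ ℝ × (0,1)`,
the `s`-derivative of `f` is `ξ₁(t)·t + ξ₂(t)·(1−t)` (namely `2√(t(1−t))`) and the
`t`-derivative of `f` is `ξ₁(t)·s − ξ₂(t)·s` (namely `s(1−2t)/√(t(1−t))`), where
`ξ₁(t) = √((1−t)/t)` and `ξ₂(t) = √(t/(1−t))`. -/
theorem conjugate_crossing_exact_lagrangian (s t : ℝ) (ht : t ∈ Set.Ioo (0 : ℝ) 1) :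
    HasDerivAt (fun s' : ℝ => 2 * s' * Real.sqrt (t * (1 - t)))
      (Real.sqrt ((1 - t) / t) * t + Real.sqrt (t / (1 - t)) * (1 - t)) s ∧
    Real.sqrt ((1 - t) / t) * t + Real.sqrt (t / (1 - t)) * (1 - t)
      = 2 * Real.sqrt (t * (1 - t)) ∧
    HasDerivAt (fun t' : ℝ => 2 * s * Real.sqrt (t' * (1 - t')))
      (Real.sqrt ((1 - t) / t) * s - Real.sqrt (t / (1 - t)) * s) t ∧
    Real.sqrt ((1 - t) / t) * s - Real.sqrt (t / (1 - t)) * s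
      = s * (1 - 2 * t) / Real.sqrt (t * (1 - t)) := by
  obtain ⟨ht0, ht1⟩ := ht
  have h1t : (0:ℝ) < 1 - t := by linarith
  have ha : (0:ℝ) < Real.sqrt t := Real.sqrt_pos.mpr ht0
  have hb : (0:ℝ) < Real.sqrt (1 - t) := Real.sqrt_pos.mpr h1t
  have ha2 : Real.sqrt t ^ 2 = t := Real.sq_sqrt ht0.le
  have hb2 : Real.sqrt (1 - t) ^ 2 = 1 - t := Real.sq_sqrt h1t.le
  have hmul : Real.sqrt (t * (1 - t)) = Real.sqrt t * Real.sqrt (1 - t) :=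
    Real.sqrt_mul ht0.le _
  have hdiv1 : Real.sqrt ((1 - t) / t) = Real.sqrt (1 - t) / Real.sqrt t :=
    Real.sqrt_div h1t.le t
  have hdiv2 : Real.sqrt (t / (1 - t)) = Real.sqrt t / Real.sqrt (1 - t) :=
    Real.sqrt_div ht0.le _
  have key1 : Real.sqrt ((1 - t) / t) * t + Real.sqrt (t / (1 - t)) * (1 - t)
      = 2 * Real.sqrt (t * (1 - t)) := by
    rw [hdiv1, hdiv2, hmul]
    field_simp
    nlinarith [ha2, hb2]
  have key2 : Real.sqrt ((1 - t) / t) * s - Real.sqrt (t / (1 - t)) * s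
      = s * (1 - 2 * t) / Real.sqrt (t * (1 - t)) := by
    rw [hdiv1, hdiv2, hmul]
    field_simp
    linear_combination s * hb2 - s * ha2
  refine ⟨?_, key1, ?_, key2⟩
  · have h := (hasDerivAt_id s).const_mul (2 * Real.sqrt (t * (1 - t)))
    simp only [mul_one] at h
    rw [key1]
    convert h using 2 <;> try rfl
    simp [id_eq]; ring
  · have hne : t * (1 - t) ≠ 0 := by positivity
    have hinner : HasDerivAt (fun t' : ℝ => t' * (1 - t')) (1 - 2 * t) t := by
      have := ((hasDerivAt_id t).mul ((hasDerivAt_const t (1:ℝ)).sub (hasDerivAt_id t)))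
      convert this using 1 <;> try rfl
      simp only [id_eq, Pi.sub_apply]; ring
    have hsq := hinner.sqrt hne
    have := hsq.const_mul (2 * s)
    convert this using 1 <;> try rfl
    rw [key2, hmul]
    have hs : Real.sqrt t * Real.sqrt (1 - t) ≠ 0 := by positivity
    field_simp
end

section
/- The map i_× : ℝ × (0,1) → ℝ⁴ defined by i_×(s,t) = (s·t, s·(1−t), √((1−t)/t), √(t/(1−t))) is injective, and its Fréchet derivative at every point (s,t) ∈ ℝ × (0,1) is an injective linear map ℝ² → ℝ⁴; that is, i_× is an injective immersion (a smooth Lagrangian embedding of the crossing model of the conjugate surface). -/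
/-- The crossing model `i_×(s,t) = (st, s(1−t), √((1−t)/t), √(t/(1−t)))` of the
conjugate Lagrangian surface. -/
noncomputable def iCross (p : ℝ × ℝ) : ℝ × ℝ × ℝ × ℝ :=
  (p.1 * p.2, p.1 * (1 - p.2),
    Real.sqrt ((1 - p.2) / p.2), Real.sqrt (p.2 / (1 - p.2)))

/-- `i_×` is injective on `ℝ × (0,1)`, and at every point of `ℝ × (0,1)`
its Fréchet derivative is an injective linear map `ℝ² → ℝ⁴`; i.e. `i_×` is an injective
immersion. -/
theorem iCross_injective_immersion :
    Set.InjOn iCross (Set.univ ×ˢ Set.Ioo (0 : ℝ) 1) ∧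
    ∀ p : ℝ × ℝ, p ∈ Set.univ ×ˢ Set.Ioo (0 : ℝ) 1 →
      ∃ L : ℝ × ℝ →L[ℝ] ℝ × ℝ × ℝ × ℝ,
        HasFDerivAt iCross L p ∧ Function.Injective L := by
  constructor
  · rintro ⟨s, t⟩ ⟨-, ht0, ht1⟩ ⟨s', t'⟩ ⟨-, ht0', ht1'⟩ h
    simp only [iCross, Prod.mk.injEq] at h
    obtain ⟨h1, h2, h3, h4⟩ := h
    have htt : t = t' := by
      have heq := (Real.sqrt_inj (div_nonneg (by linarith) ht0.le) (div_nonneg (by linarith) ht0'.le)).mp h3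
      have h5 : (1 - t) * t' = (1 - t') * t :=
        (div_eq_div_iff ht0.ne' ht0'.ne').mp heq
      nlinarith
    subst htt
    have hs : s = s' := mul_right_cancel₀ ht0.ne' h1
    simp [hs]
  · rintro ⟨s, t⟩ ⟨-, ht0, ht1⟩
    have ht1' : (0:ℝ) < 1 - t := by linarith
    have hg1 : HasDerivAt (fun t : ℝ => (1 - t) / t)
        (((0 - 1) * t - (1 - t) * 1) / t ^ 2) t :=
      ((hasDerivAt_const t 1).sub (hasDerivAt_id t)).div (hasDerivAt_id t) ht0.ne'
    have hs1 : HasDerivAt (fun t : ℝ => Real.sqrt ((1 - t) / t))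
        (1 / (2 * Real.sqrt ((1 - t) / t)) * (((0 - 1) * t - (1 - t) * 1) / t ^ 2)) t :=
      (Real.hasDerivAt_sqrt (by positivity)).comp t hg1
    have hg2 : HasDerivAt (fun t : ℝ => t / (1 - t))
        ((1 * (1 - t) - t * (0 - 1)) / (1 - t) ^ 2) t :=
      (hasDerivAt_id t).div ((hasDerivAt_const t 1).sub (hasDerivAt_id t)) ht1'.ne'
    have hs2 : HasDerivAt (fun t : ℝ => Real.sqrt (t / (1 - t)))
        (1 / (2 * Real.sqrt (t / (1 - t))) * ((1 * (1 - t) - t * (0 - 1)) / (1 - t) ^ 2)) t :=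
      (Real.hasDerivAt_sqrt (by positivity)).comp t hg2
    have hsq : 0 < Real.sqrt (t / (1 - t)) := Real.sqrt_pos.mpr (by positivity)
    have hb : 0 < 1 / (2 * Real.sqrt (t / (1 - t))) *
        ((1 * (1 - t) - t * (0 - 1)) / (1 - t) ^ 2) := by
      apply mul_pos
      · exact div_pos one_pos (by linarith)
      · exact div_pos (by nlinarith) (by positivity)
    have h1F : HasFDerivAt (fun p : ℝ × ℝ => p.1 * p.2)
        ((s, t).1 • ContinuousLinearMap.snd ℝ ℝ ℝ + (s, t).2 • ContinuousLinearMap.fst ℝ ℝ ℝ)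
        (s, t) := (hasFDerivAt_fst (p := (s, t))).mul (hasFDerivAt_snd (p := (s, t)))
    have h2F : HasFDerivAt (fun p : ℝ × ℝ => p.1 * (1 - p.2))
        ((s, t).1 • ((0 : ℝ × ℝ →L[ℝ] ℝ) - ContinuousLinearMap.snd ℝ ℝ ℝ) +
          (1 - (s, t).2) • ContinuousLinearMap.fst ℝ ℝ ℝ) (s, t) :=
      (hasFDerivAt_fst (p := (s, t))).mul
        ((hasFDerivAt_const (1:ℝ) ((s,t) : ℝ × ℝ)).sub (hasFDerivAt_snd (p := (s, t))))
    have h3F : HasFDerivAt (fun p : ℝ × ℝ => Real.sqrt ((1 - p.2) / p.2))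
        ((1 / (2 * Real.sqrt ((1 - t) / t)) * (((0 - 1) * t - (1 - t) * 1) / t ^ 2)) •
          ContinuousLinearMap.snd ℝ ℝ ℝ) (s, t) :=
      hs1.comp_hasFDerivAt (f := Prod.snd) (h₂ := fun t : ℝ => Real.sqrt ((1 - t) / t)) (s, t) (hasFDerivAt_snd (p := (s, t)))
    have h4F : HasFDerivAt (fun p : ℝ × ℝ => Real.sqrt (p.2 / (1 - p.2)))
        ((1 / (2 * Real.sqrt (t / (1 - t))) * ((1 * (1 - t) - t * (0 - 1)) / (1 - t) ^ 2)) •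
          ContinuousLinearMap.snd ℝ ℝ ℝ) (s, t) :=
      hs2.comp_hasFDerivAt (f := Prod.snd) (h₂ := fun t : ℝ => Real.sqrt (t / (1 - t))) (s, t) (hasFDerivAt_snd (p := (s, t)))
    refine ⟨_, HasFDerivAt.prodMk h1F (HasFDerivAt.prodMk h2F (HasFDerivAt.prodMk h3F h4F)), ?_⟩
    have key : ∀ w : ℝ × ℝ,
        ((s, t).1 • ContinuousLinearMap.snd ℝ ℝ ℝ + (s, t).2 • ContinuousLinearMap.fst ℝ ℝ ℝ).prod
          (((s, t).1 • ((0 : ℝ × ℝ →L[ℝ] ℝ) - ContinuousLinearMap.snd ℝ ℝ ℝ) +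
            (1 - (s, t).2) • ContinuousLinearMap.fst ℝ ℝ ℝ).prod
            (((1 / (2 * Real.sqrt ((1 - t) / t)) * (((0 - 1) * t - (1 - t) * 1) / t ^ 2)) •
              ContinuousLinearMap.snd ℝ ℝ ℝ).prod
              ((1 / (2 * Real.sqrt (t / (1 - t))) * ((1 * (1 - t) - t * (0 - 1)) / (1 - t) ^ 2)) •
                ContinuousLinearMap.snd ℝ ℝ ℝ))) w = 0 → w = 0 := by
      rintro ⟨u, v⟩ hw0
      simp only [ContinuousLinearMap.prod_apply, ContinuousLinearMap.add_apply,
        ContinuousLinearMap.smul_apply, ContinuousLinearMap.coe_snd', ContinuousLinearMap.coe_fst',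
        ContinuousLinearMap.sub_apply, ContinuousLinearMap.zero_apply, smul_eq_mul,
        Prod.mk_eq_zero] at hw0
      obtain ⟨e1, e2, e3, e4⟩ := hw0
      have hv : v = 0 := by
        by_contra hv
        exact hv (by
          have := mul_eq_zero.mp e4
          rcases this with h | h
          · exact absurd h hb.ne'
          · exact h)
      subst hv
      have hu : u = 0 := by
        simp at e1
        rcases e1 with h | h
        · exact absurd h ht0.ne'
        · exact h
      simp [hu]
    intro w₁ w₂ hw
    have := key (w₁ - w₂) (by rw [map_sub, hw, sub_self])
    exact sub_eq_zero.mp this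
end

section
/- For (r,θ) ∈ ℝ² define x₁(r,θ) = r²·sin(3θ/2)·cos(θ/2), x₂(r,θ) = r²·sin(3θ/2)·sin(θ/2), ξ₁(r,θ) = −r·sin θ, ξ₂(r,θ) = −r·cos θ, and f(r,θ) = −(2/3)·r³·sin²(3θ/2). Then at every (r,θ) ∈ ℝ²: ξ₁·(∂x₁/∂r) + ξ₂·(∂x₂/∂r) equals the partial derivative of f in r (both sides being −2·r²·sin²(3θ/2)), and ξ₁·(∂x₁/∂θ) + ξ₂·(∂x₂/∂θ) equals the partial derivative of f in θ (both sides being −r³·sin(3θ)). Hence the map Φ_{L_{1/2}}(r,θ) = (x₁,x₂,ξ₁,ξ₂)(r,θ) is an exact Lagrangian parametrization with primitive f. -/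
/-- The map `Φ_{L_{1/2}}(r,θ) = (x₁,x₂,ξ₁,ξ₂)(r,θ)` with
`x₁ = r²sin(3θ/2)cos(θ/2)`, `x₂ = r²sin(3θ/2)sin(θ/2)`, `ξ₁ = −r sin θ`,
`ξ₂ = −r cos θ` is an exact Lagrangian parametrization with primitive
`f(r,θ) = −(2/3)r³sin²(3θ/2)`: at every `(r,θ)`,
`ξ₁·∂x₁/∂r + ξ₂·∂x₂/∂r = ∂f/∂r` (both sides being `−2r²sin²(3θ/2)`) and
`ξ₁·∂x₁/∂θ + ξ₂·∂x₂/∂θ = ∂f/∂θ` (both sides being `−r³sin(3θ)`). -/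
theorem PhiHalf_exact_lagrangian (r θ : ℝ) :
    ((-r * Real.sin θ) *
        deriv (fun r' : ℝ => r' ^ 2 * Real.sin (3 * θ / 2) * Real.cos (θ / 2)) r
      + (-r * Real.cos θ) *
        deriv (fun r' : ℝ => r' ^ 2 * Real.sin (3 * θ / 2) * Real.sin (θ / 2)) r
      = deriv (fun r' : ℝ => -(2 / 3) * r' ^ 3 * Real.sin (3 * θ / 2) ^ 2) r) ∧
    deriv (fun r' : ℝ => -(2 / 3) * r' ^ 3 * Real.sin (3 * θ / 2) ^ 2) r
      = -2 * r ^ 2 * Real.sin (3 * θ / 2) ^ 2 ∧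
    ((-r * Real.sin θ) *
        deriv (fun θ' : ℝ => r ^ 2 * Real.sin (3 * θ' / 2) * Real.cos (θ' / 2)) θ
      + (-r * Real.cos θ) *
        deriv (fun θ' : ℝ => r ^ 2 * Real.sin (3 * θ' / 2) * Real.sin (θ' / 2)) θ
      = deriv (fun θ' : ℝ => -(2 / 3) * r ^ 3 * Real.sin (3 * θ' / 2) ^ 2) θ) ∧
    deriv (fun θ' : ℝ => -(2 / 3) * r ^ 3 * Real.sin (3 * θ' / 2) ^ 2) θ
      = -(r ^ 3) * Real.sin (3 * θ) := by
  -- r-direction derivatives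
  have h1 : HasDerivAt (fun r' : ℝ => r' ^ 2 * Real.sin (3 * θ / 2) * Real.cos (θ / 2))
      (2 * r ^ 1 * Real.sin (3 * θ / 2) * Real.cos (θ / 2)) r := by
    simpa [mul_assoc, mul_comm, mul_left_comm] using
      (((hasDerivAt_pow 2 r).mul_const (Real.sin (3 * θ / 2))).mul_const (Real.cos (θ / 2)))
  have h2 : HasDerivAt (fun r' : ℝ => r' ^ 2 * Real.sin (3 * θ / 2) * Real.sin (θ / 2))
      (2 * r ^ 1 * Real.sin (3 * θ / 2) * Real.sin (θ / 2)) r := by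
    simpa [mul_assoc, mul_comm, mul_left_comm] using
      (((hasDerivAt_pow 2 r).mul_const (Real.sin (3 * θ / 2))).mul_const (Real.sin (θ / 2)))
  have hf : HasDerivAt (fun r' : ℝ => -(2 / 3) * r' ^ 3 * Real.sin (3 * θ / 2) ^ 2)
      (-(2 / 3) * (3 * r ^ 2) * Real.sin (3 * θ / 2) ^ 2) r := by
    have := (((hasDerivAt_pow 3 r).const_mul (-(2 / 3) : ℝ)).mul_const
      (Real.sin (3 * θ / 2) ^ 2))
    simpa [mul_assoc, mul_comm, mul_left_comm] using this
  -- θ-direction derivatives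
  have hlin : HasDerivAt (fun x : ℝ => 3 * x / 2) (3 / 2 : ℝ) θ := by
    simpa using ((hasDerivAt_id θ).const_mul (3 : ℝ)).div_const 2
  have hhalf : HasDerivAt (fun x : ℝ => x / 2) (1 / 2 : ℝ) θ := by
    simpa using (hasDerivAt_id θ).div_const 2
  have hs : HasDerivAt (fun x : ℝ => Real.sin (3 * x / 2)) (Real.cos (3 * θ / 2) * (3 / 2)) θ :=
    hlin.sin
  have hcos : HasDerivAt (fun x : ℝ => Real.cos (x / 2)) (-Real.sin (θ / 2) * (1 / 2)) θ :=
    hhalf.cos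
  have hsin : HasDerivAt (fun x : ℝ => Real.sin (x / 2)) (Real.cos (θ / 2) * (1 / 2)) θ :=
    hhalf.sin
  have h3 : HasDerivAt (fun θ' : ℝ => r ^ 2 * Real.sin (3 * θ' / 2) * Real.cos (θ' / 2))
      ((r ^ 2 * (Real.cos (3 * θ / 2) * (3 / 2))) * Real.cos (θ / 2)
        + (r ^ 2 * Real.sin (3 * θ / 2)) * (-Real.sin (θ / 2) * (1 / 2))) θ := by
    simpa [mul_assoc, Pi.mul_def] using ((hs.const_mul (r ^ 2)).mul hcos)
  have h4 : HasDerivAt (fun θ' : ℝ => r ^ 2 * Real.sin (3 * θ' / 2) * Real.sin (θ' / 2))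
      ((r ^ 2 * (Real.cos (3 * θ / 2) * (3 / 2))) * Real.sin (θ / 2)
        + (r ^ 2 * Real.sin (3 * θ / 2)) * (Real.cos (θ / 2) * (1 / 2))) θ := by
    simpa [mul_assoc, Pi.mul_def] using ((hs.const_mul (r ^ 2)).mul hsin)
  have hg : HasDerivAt (fun θ' : ℝ => -(2 / 3) * r ^ 3 * Real.sin (3 * θ' / 2) ^ 2)
      ((-(2 / 3) * r ^ 3) * ((2 : ℕ) * Real.sin (3 * θ / 2) ^ 1
        * (Real.cos (3 * θ / 2) * (3 / 2)))) θ :=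
    (hs.pow 2).const_mul (-(2 / 3) * r ^ 3)
  rw [h1.deriv, h2.deriv, hf.deriv, h3.deriv, h4.deriv, hg.deriv]
  have e32 : 3 * θ / 2 = θ + θ / 2 := by ring
  have e3 : 3 * θ = 3 * θ / 2 + 3 * θ / 2 := by ring
  have et : θ = θ / 2 + θ / 2 := by ring
  have pyth := Real.sin_sq_add_cos_sq (θ / 2)
  refine ⟨?_, ?_, ?_, ?_⟩
  · rw [e32, Real.sin_add]; ring
  · ring
  · have hS : Real.sin (3 * θ / 2) = 3 * Real.sin (θ / 2) - 4 * Real.sin (θ / 2) ^ 3 := by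
      have : 3 * θ / 2 = 3 * (θ / 2) := by ring
      rw [this, Real.sin_three_mul]
    have hC : Real.cos (3 * θ / 2) = 4 * Real.cos (θ / 2) ^ 3 - 3 * Real.cos (θ / 2) := by
      have : 3 * θ / 2 = 3 * (θ / 2) := by ring
      rw [this, Real.cos_three_mul]
    have hsinθ : Real.sin θ = 2 * Real.sin (θ / 2) * Real.cos (θ / 2) := by
      conv_lhs => rw [et, Real.sin_add]
      ring
    have hcosθ : Real.cos θ = Real.cos (θ / 2) ^ 2 - Real.sin (θ / 2) ^ 2 := by
      conv_lhs => rw [et, Real.cos_add]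
      ring
    rw [hS, hC, hsinθ, hcosθ]
    linear_combination (r ^ 3 * Real.cos (θ / 2) * Real.sin (θ / 2) *
      (-18 * Real.cos (θ / 2) ^ 2 - 6 * Real.sin (θ / 2) ^ 2 + 18)) * pyth
  · rw [e3, Real.sin_add]; ring
end

section
/- The map Φ_{L_{1/2}}(r,θ) = (r²·sin(3θ/2)·cos(θ/2), r²·sin(3θ/2)·sin(θ/2), −r·sin θ, −r·cos θ) is injective on (0,∞) × [0,2π): if r, r′ > 0 and θ, θ′ ∈ [0,2π) satisfy Φ_{L_{1/2}}(r,θ) = Φ_{L_{1/2}}(r′,θ′), then r = r′ and θ = θ′. -/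
/-- The intermediate Lagrangian filling `Φ_{L_{1/2}}` of the Reidemeister III1 move. -/
noncomputable def PhiHalf (r θ : ℝ) : ℝ × ℝ × ℝ × ℝ :=
  (r ^ 2 * Real.sin (3 * θ / 2) * Real.cos (θ / 2),
   r ^ 2 * Real.sin (3 * θ / 2) * Real.sin (θ / 2),
   -r * Real.sin θ, -r * Real.cos θ)

/-- `Φ_{L_{1/2}}` is injective on `(0,∞) × [0,2π)`. -/
theorem PhiHalf_injective (r r' θ θ' : ℝ) (hr : 0 < r) (hr' : 0 < r')
    (hθ : θ ∈ Set.Ico 0 (2 * Real.pi)) (hθ' : θ' ∈ Set.Ico 0 (2 * Real.pi))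
    (h : PhiHalf r θ = PhiHalf r' θ') : r = r' ∧ θ = θ' := by
  obtain ⟨hθ0, hθ2⟩ := hθ
  obtain ⟨hθ'0, hθ'2⟩ := hθ'
  simp only [PhiHalf, Prod.mk.injEq] at h
  obtain ⟨-, -, h3, h4⟩ := h
  have hs : r * Real.sin θ = r' * Real.sin θ' := by linarith
  have hc : r * Real.cos θ = r' * Real.cos θ' := by linarith
  have p := Real.sin_sq_add_cos_sq θ
  have p' := Real.sin_sq_add_cos_sq θ'
  have hrr : r = r' := by
    have e1 : (r * Real.sin θ) ^ 2 = (r' * Real.sin θ') ^ 2 := by rw [hs]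
    have e2 : (r * Real.cos θ) ^ 2 = (r' * Real.cos θ') ^ 2 := by rw [hc]
    have h2 : r ^ 2 = r' ^ 2 := by
      linear_combination e1 + e2 - r ^ 2 * p + r' ^ 2 * p'
    nlinarith
  subst hrr
  have hs' : Real.sin θ = Real.sin θ' := mul_left_cancel₀ (ne_of_gt hr) hs
  have hc' : Real.cos θ = Real.cos θ' := mul_left_cancel₀ (ne_of_gt hr) hc
  refine ⟨rfl, ?_⟩
  have hcos1 : Real.cos (θ - θ') = 1 := by
    rw [Real.cos_sub, hs', hc']
    linear_combination p'
  have := (Real.cos_eq_one_iff_of_lt_of_lt (by linarith) (by linarith)).mp hcos1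
  linarith
end

section
/- Let f : ℝ → ℝ be differentiable and let ε ∈ {1, −1}. Define G : ℝ × (0,∞) → ℝ⁴ by G(x,w) = (x, ε·(w − f(x)), ε·f′(x)/w, 1/w). Then G is injective, and G is an exact Lagrangian parametrization with primitive (x,w) ↦ ε·log w: at every (x,w) ∈ ℝ × (0,∞), writing G = (x₁,x₂,ξ₁,ξ₂), one has ξ₁·(∂x₁/∂x) + ξ₂·(∂x₂/∂x) = 0 = ∂(ε·log w)/∂x and ξ₁·(∂x₁/∂w) + ξ₂·(∂x₂/∂w) = ε/w = ∂(ε·log w)/∂w. -/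
/-- For `f : ℝ → ℝ` differentiable and `ε ∈ {1,−1}`, the map
`G(x,w) = (x, ε(w − f(x)), ε f′(x)/w, 1/w)` on `ℝ × (0,∞)` is injective, and it is an
exact Lagrangian parametrization with primitive `(x,w) ↦ ε·log w`:
`ξ₁·∂x₁/∂x + ξ₂·∂x₂/∂x = 0 = ∂(ε log w)/∂x` and
`ξ₁·∂x₁/∂w + ξ₂·∂x₂/∂w = ε/w = ∂(ε log w)/∂w`. -/
theorem RII_sheet_injective_exact (f : ℝ → ℝ) (hf : Differentiable ℝ f) (ε : ℝ)
    (hε : ε = 1 ∨ ε = -1) :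
    Set.InjOn (fun p : ℝ × ℝ =>
        (p.1, ε * (p.2 - f p.1), ε * deriv f p.1 / p.2, 1 / p.2))
      (Set.univ ×ˢ Set.Ioi (0 : ℝ)) ∧
    ∀ x w : ℝ, 0 < w →
      ((ε * deriv f x / w) * deriv (fun x' : ℝ => x') x
          + (1 / w) * deriv (fun x' : ℝ => ε * (w - f x')) x = 0) ∧
      deriv (fun _ : ℝ => ε * Real.log w) x = 0 ∧
      ((ε * deriv f x / w) * deriv (fun _ : ℝ => x) w
          + (1 / w) * deriv (fun w' : ℝ => ε * (w' - f x)) w = ε / w) ∧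
      deriv (fun w' : ℝ => ε * Real.log w') w = ε / w := by
  constructor
  · rintro ⟨x, w⟩ ⟨-, hw⟩ ⟨x', w'⟩ ⟨-, hw'⟩ h
    simp only [Prod.mk.injEq] at h
    have hx : x = x' := h.1
    have hwne : w ≠ 0 := ne_of_gt hw
    have hw'ne : w' ≠ 0 := ne_of_gt hw'
    have : w = w' := by
      have := h.2.2.2
      field_simp at this
      linarith
    exact Prod.ext hx this
  · intro x w hw
    have hwne : w ≠ 0 := ne_of_gt hw
    refine ⟨?_, ?_, ?_, ?_⟩
    · have h1 : deriv (fun x' : ℝ => x') x = 1 := by simp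
      have h2 : deriv (fun x' : ℝ => ε * (w - f x')) x = ε * (-deriv f x) := by
        rw [show (fun x' : ℝ => ε * (w - f x')) = fun x' => ε * (w - f x') from rfl]
        rw [deriv_const_mul (d := fun x' => w - f x') _ ((differentiable_const w).sub hf).differentiableAt]
        rw [deriv_fun_sub (differentiableAt_const w) (hf x)]
        simp
      rw [h1, h2]
      field_simp
      ring
    · simp
    · have h1 : deriv (fun _ : ℝ => x) w = 0 := by simp
      have h2 : deriv (fun w' : ℝ => ε * (w' - f x)) w = ε := by
        simp [deriv_const_mul_field, deriv_sub_const]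
      rw [h1, h2]
      field_simp
      ring
    · rw [deriv_const_mul _ (Real.differentiableAt_log hwne)]
      rw [Real.deriv_log]
      field_simp
end

section
/- Let t ∈ ℝ and let α ∈ ℝ, with R the rotation of ℝ² by angle α (the matrix with rows (cos α, −sin α) and (sin α, cos α)). Define G : ℝ × (0,∞) → ℝ² × ℝ² by G(x,w) = (R·(x, t − w − 1/2), R·(0, −1/w)). Then, writing G = (b₁, b₂, η₁, η₂), at every (x,w) ∈ ℝ × (0,∞): η₁·(∂b₁/∂x) + η₂·(∂b₂/∂x) = 0 and η₁·(∂b₁/∂w) + η₂·(∂b₂/∂w) = 1/w; i.e. G is an exact Lagrangian parametrization with primitive (x,w) ↦ log w. -/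
/-- For the rotation `R` of `ℝ²` by angle `α`, the sheet
`G(x,w) = (R·(x, t − w − 1/2), R·(0, −1/w))` of the Reidemeister III2 local model is an
exact Lagrangian parametrization with primitive `(x,w) ↦ log w`:
`η₁·∂b₁/∂x + η₂·∂b₂/∂x = 0` and `η₁·∂b₁/∂w + η₂·∂b₂/∂w = 1/w`. -/
theorem RIII2_sheet_exact_lagrangian (t α x w : ℝ) (hw : 0 < w) :
    let η₁ := (0 : ℝ) * Real.cos α - (-(1 / w)) * Real.sin α
    let η₂ := (0 : ℝ) * Real.sin α + (-(1 / w)) * Real.cos α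
    (η₁ * deriv (fun x' : ℝ => x' * Real.cos α - (t - w - 1 / 2) * Real.sin α) x
      + η₂ * deriv (fun x' : ℝ => x' * Real.sin α + (t - w - 1 / 2) * Real.cos α) x
      = 0) ∧
    (η₁ * deriv (fun w' : ℝ => x * Real.cos α - (t - w' - 1 / 2) * Real.sin α) w
      + η₂ * deriv (fun w' : ℝ => x * Real.sin α + (t - w' - 1 / 2) * Real.cos α) w
      = 1 / w) := by
  have h1 : deriv (fun x' : ℝ => x' * Real.cos α - (t - w - 1 / 2) * Real.sin α) x
      = Real.cos α := by
    simp
  have h2 : deriv (fun x' : ℝ => x' * Real.sin α + (t - w - 1 / 2) * Real.cos α) x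
      = Real.sin α := by
    simp
  have hc : ∀ w' : ℝ, HasDerivAt (fun w' : ℝ => t - w' - 1 / 2) (-1) w' := by
    intro w'
    simpa using (((hasDerivAt_id w').const_sub t).sub_const (1/2))
  have h3 : deriv (fun w' : ℝ => x * Real.cos α - (t - w' - 1 / 2) * Real.sin α) w
      = Real.sin α := by
    have := ((hasDerivAt_const w (x * Real.cos α)).sub ((hc w).mul_const (Real.sin α))).deriv
    simpa using this
  have h4 : deriv (fun w' : ℝ => x * Real.sin α + (t - w' - 1 / 2) * Real.cos α) w
      = -Real.cos α := by
    have := ((hasDerivAt_const w (x * Real.sin α)).add ((hc w).mul_const (Real.cos α))).deriv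
    simpa using this
  refine ⟨?_, ?_⟩
  · rw [h1, h2]; ring
  · rw [h3, h4]
    have : Real.sin α ^ 2 + Real.cos α ^ 2 = 1 := Real.sin_sq_add_cos_sq α
    field_simp
    nlinarith [this]
end

section
/- Let k be a field and let V_{i−1} ⊂ V_i be subspaces of a k-vector space V with finrank V_{i−1} = i−1 and finrank V_i = i. For every nonzero ω′ ∈ ⋀^{i−1} V_{i−1} and every nonzero ω ∈ ⋀^{i} V_i (both regarded in the exterior powers of V via the canonical maps), there exists v ∈ V_i such that ω′ ∧ v = ω; moreover, any two such v differ by an element of V_{i−1}. -/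
/-- The image of the `m`-th exterior power `⋀^m W` of a subspace `W ≤ V` inside the
exterior algebra of `V`, under the canonical map induced by the inclusion `W → V`. -/
noncomputable def extPowerImage (k : Type*) [Field k] {V : Type*} [AddCommGroup V]
    [Module k V] (m : ℕ) (W : Submodule k V) : Submodule k (ExteriorAlgebra k V) :=
  (Submodule.map (ExteriorAlgebra.ι k (M := V)) W) ^ m

section Aux

open ExteriorAlgebra

variable {k : Type*} [Field k] {V : Type*} [AddCommGroup V] [Module k V]

/-- `ιMulti` of a linearly independent family is nonzero. -/
lemma ιMulti_ne_zero_of_linearIndependent {n : ℕ} {v : Fin n → V}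
    (hv : LinearIndependent k v) : ExteriorAlgebra.ιMulti k n v ≠ 0 := by
  classical
  have hs : LinearIndepOn k id (Set.range v) := (linearIndepOn_id_range_iff hv.injective).mpr hv
  let B := Module.Basis.extend hs
  have hsub : Set.range v ⊆ hs.extend (Set.subset_univ _) := hs.subset_extend _
  let idx : Fin n → hs.extend (Set.subset_univ _) := fun j => ⟨v j, hsub ⟨j, rfl⟩⟩
  have hBidx : ∀ j, B (idx j) = v j := fun j => Module.Basis.extend_apply_self hs (idx j)
  have hidx_inj : Function.Injective idx := by
    intro a b hab
    exact hv.injective (Subtype.ext_iff.mp hab)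
  let φ : V →ₗ[k] (Fin n → k) := LinearMap.pi fun j => B.coord (idx j)
  let f : V [⋀^Fin n]→ₗ[k] k := (Matrix.detRowAlternating).compLinearMap φ
  have hfv : f v = 1 := by
    have : (fun j => φ (v j)) = (1 : Matrix (Fin n) (Fin n) k) := by
      funext a b
      simp only [φ, LinearMap.pi_apply, Module.Basis.coord_apply]
      rw [← hBidx a, B.repr_self]
      simp [Finsupp.single_apply, Matrix.one_apply, hidx_inj.eq_iff, eq_comm]
    show Matrix.detRowAlternating (fun j => φ (v j)) = 1
    rw [show ((fun j => φ (v j)) : Fin n → Fin n → k) = (1 : Matrix (Fin n) (Fin n) k) from this]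
    exact Matrix.det_one
  let g : ∀ m, V [⋀^Fin m]→ₗ[k] k :=
    Function.update (fun m => (0 : V [⋀^Fin m]→ₗ[k] k)) n f
  have hgn : g n = f := by simp [g]
  intro h0
  have := liftAlternating_apply_ιMulti (R := k) (M := V) (N := k) g v
  rw [h0, map_zero, hgn, hfv] at this
  exact one_ne_zero this.symm

lemma ofFn_prod_mem_pow {A : Type*} [Semiring A] [Algebra k A]
    (p : Submodule k A) : ∀ (n : ℕ) (f : Fin n → A), (∀ j, f j ∈ p) →
    (List.ofFn f).prod ∈ p ^ n := by
  intro n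
  induction n with
  | zero => intro f _; simp [Submodule.one_eq_span]
  | succ m ih =>
    intro f hf
    rw [List.ofFn_succ, List.prod_cons, pow_succ']
    exact Submodule.mul_mem_mul (hf 0) (ih _ fun j => hf j.succ)

lemma extPowerImage_eq_span {n : ℕ} {W : Submodule k V} {v : Fin n → V}
    (hv : LinearIndependent k v) (hsp : Submodule.span k (Set.range v) = W) :
    extPowerImage k n W = Submodule.span k {ExteriorAlgebra.ιMulti k n v} := by
  classical
  have hmap : Submodule.map (ExteriorAlgebra.ι k (M := V)) W
      = Submodule.span k (ExteriorAlgebra.ι k '' Set.range v) := by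
    rw [← hsp, Submodule.map_span]
  unfold extPowerImage
  rw [hmap]
  apply le_antisymm
  · rw [Submodule.span_pow, Submodule.span_le]
    intro x hx
    rw [Set.mem_pow] at hx
    obtain ⟨f, hf⟩ := hx
    have hch : ∀ j, ∃ a : Fin n, ExteriorAlgebra.ι k (v a) = (f j : ExteriorAlgebra k V) := by
      intro j
      obtain ⟨y, ⟨a, rfl⟩, hy⟩ := (f j).2
      exact ⟨a, hy⟩
    choose g hg using hch
    have hx' : x = ExteriorAlgebra.ιMulti k n (v ∘ g) := by
      have hfun : (fun j => ExteriorAlgebra.ι k ((v ∘ g) j))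
          = fun j => (f j : ExteriorAlgebra k V) := funext fun j => hg j
      rw [ιMulti_apply, hfun, hf]
    by_cases hginj : Function.Injective g
    · have hgbij : Function.Bijective g := Finite.injective_iff_bijective.mp hginj
      let σ : Equiv.Perm (Fin n) := Equiv.ofBijective g hgbij
      have : v ∘ g = v ∘ σ := rfl
      rw [hx', this, AlternatingMap.map_perm]
      rcases Int.units_eq_one_or (Equiv.Perm.sign σ) with h | h
      · rw [h, one_smul]
        exact Submodule.mem_span_singleton_self _
      · rw [h]
        have : ((-1 : ℤˣ) • ExteriorAlgebra.ιMulti k n v) = -(ExteriorAlgebra.ιMulti k n v) := by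
          simp
        rw [this]
        exact neg_mem (Submodule.mem_span_singleton_self _)
    · have : ¬ Function.Injective (v ∘ g) := by
        intro hinj
        exact hginj fun a b hab => hinj (by simp [Function.comp, hab])
      rw [hx', AlternatingMap.map_eq_zero_of_not_injective _ _ this]
      exact zero_mem _
  · rw [Submodule.span_le, Set.singleton_subset_iff, SetLike.mem_coe, ιMulti_apply]
    apply ofFn_prod_mem_pow
    intro j
    exact Submodule.subset_span ⟨v j, ⟨j, rfl⟩, rfl⟩


lemma ιMulti_snoc {n : ℕ} (v : Fin n → V) (x : V) :
    ExteriorAlgebra.ιMulti k (n + 1) (Fin.snoc v x)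
      = ExteriorAlgebra.ιMulti k n v * ExteriorAlgebra.ι k x := by
  rw [ιMulti_apply, ιMulti_apply, List.ofFn_succ', List.concat_eq_append, List.prod_append]
  simp [Fin.snoc_castSucc, Fin.snoc_last]

end Aux

/-- Let `W₁ ⊂ W₂` be subspaces with `finrank W₁ = i` and
`finrank W₂ = i + 1`. For every nonzero `ω′ ∈ ⋀^i W₁` and nonzero `ω ∈ ⋀^{i+1} W₂`
(inside the exterior powers of `V`) there exists `v ∈ W₂` with `ω′ ∧ v = ω`; moreover
any two such `v` differ by an element of `W₁`. -/
theorem exists_unique_mod_vector_wedge (k : Type*) [Field k] (V : Type*)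
    [AddCommGroup V] [Module k V] (i : ℕ) (W₁ W₂ : Submodule k V) (hle : W₁ ≤ W₂)
    [FiniteDimensional k W₂]
    (h₁ : Module.finrank k W₁ = i) (h₂ : Module.finrank k W₂ = i + 1)
    (ω' ω : ExteriorAlgebra k V)
    (hω' : ω' ∈ extPowerImage k i W₁) (hω'0 : ω' ≠ 0)
    (hω : ω ∈ extPowerImage k (i + 1) W₂) (hω0 : ω ≠ 0) :
    (∃ v ∈ W₂, ω' * ExteriorAlgebra.ι k v = ω) ∧
    ∀ v v' : V, ω' * ExteriorAlgebra.ι k v = ω → ω' * ExteriorAlgebra.ι k v' = ω →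
      v - v' ∈ W₁ := by
  classical
  haveI : FiniteDimensional k W₁ := Submodule.finiteDimensional_of_le hle
  -- a basis of W₁
  let b : Module.Basis (Fin i) k W₁ := (Module.finBasis k W₁).reindex (finCongr h₁)
  let bV : Fin i → V := fun j => (b j : V)
  have hbV_li : LinearIndependent k bV :=
    b.linearIndependent.map' W₁.subtype (Submodule.ker_subtype W₁)
  have hbV_span : Submodule.span k (Set.range bV) = W₁ := by
    have : Set.range bV = W₁.subtype '' Set.range b := by
      rw [← Set.range_comp]; rfl
    rw [this, ← Submodule.map_span, b.span_eq, Submodule.map_subtype_top]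
  set E := ExteriorAlgebra.ιMulti k i bV with hE
  have hE0 : E ≠ 0 := ιMulti_ne_zero_of_linearIndependent hbV_li
  have hω'span : ω' ∈ Submodule.span k {E} := by
    rwa [← extPowerImage_eq_span hbV_li hbV_span]
  obtain ⟨c, hc⟩ := Submodule.mem_span_singleton.mp hω'span
  have hc0 : c ≠ 0 := by rintro rfl; rw [zero_smul] at hc; exact hω'0 hc.symm
  -- pick u ∈ W₂ \ W₁
  have hlt : W₁ < W₂ := lt_of_le_of_ne hle (by rintro rfl; omega)
  obtain ⟨u, huW₂, huW₁⟩ := SetLike.exists_of_lt hlt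
  -- basis family of W₂
  let fam : Fin (i + 1) → V := Fin.snoc bV u
  have hfam_li : LinearIndependent k fam :=
    linearIndependent_fin_snoc.mpr ⟨hbV_li, by rwa [hbV_span]⟩
  have hfam_span : Submodule.span k (Set.range fam) = W₂ := by
    apply Submodule.eq_of_le_of_finrank_eq
    · rw [Submodule.span_le]
      rintro x ⟨j, rfl⟩
      induction j using Fin.lastCases with
      | last => simpa only [fam, Fin.snoc_last, SetLike.mem_coe] using huW₂
      | cast m => simpa only [fam, Fin.snoc_castSucc, SetLike.mem_coe] using hle (b m).2
    · rw [finrank_span_eq_card hfam_li, h₂, Fintype.card_fin]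
  set F := ExteriorAlgebra.ιMulti k (i + 1) fam with hFdef
  have hF0 : F ≠ 0 := ιMulti_ne_zero_of_linearIndependent hfam_li
  have hωspan : ω ∈ Submodule.span k {F} := by
    rwa [← extPowerImage_eq_span hfam_li hfam_span]
  obtain ⟨d, hd⟩ := Submodule.mem_span_singleton.mp hωspan
  have hd0 : d ≠ 0 := by rintro rfl; rw [zero_smul] at hd; exact hω0 hd.symm
  have hF : F = E * ExteriorAlgebra.ι k u := ιMulti_snoc bV u
  constructor
  · refine ⟨(c⁻¹ * d) • u, Submodule.smul_mem _ _ huW₂, ?_⟩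
    rw [← hc, ← hd, hF, map_smul, mul_smul_comm, smul_mul_assoc, smul_smul,
      mul_comm c⁻¹ d, mul_assoc, inv_mul_cancel₀ hc0, mul_one]
  · intro v v' hv hv'
    have hzero : ω' * ExteriorAlgebra.ι k (v - v') = 0 := by
      rw [map_sub, mul_sub, hv, hv', sub_self]
    rw [← hc, smul_mul_assoc, smul_eq_zero] at hzero
    have hEz : E * ExteriorAlgebra.ι k (v - v') = 0 := hzero.resolve_left hc0
    by_contra hmem
    have hli : LinearIndependent k (Fin.snoc bV (v - v') : Fin (i+1) → V) :=
      linearIndependent_fin_snoc.mpr ⟨hbV_li, by rwa [hbV_span]⟩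
    exact ιMulti_ne_zero_of_linearIndependent hli (by rw [ιMulti_snoc, ← hE, hEz])
end

section
/- Let k be a field and a, b, c, d ∈ k². Define δ(u,v) = u₀·v₁ − u₁·v₀. Assume δ(c,b) ≠ 0 and δ(a,d) ≠ 0. Suppose μ, ν ∈ k satisfy a − μ·c ∈ span{b} and μ·c − ν·a ∈ span{d}. Then ν = (δ(a,b)·δ(c,d)) / (δ(b,c)·δ(d,a)). In other words, the composition of the canonical transport maps l_a → V/l_b ← l_c → V/l_d ← l_a for four lines l_a, l_b, l_c, l_d in a 2-dimensional space, with consecutive lines transverse, is multiplication by the cross ratio ⟨l_a,l_b,l_c,l_d⟩ = (ω_a∧ω_b)(ω_c∧ω_d)/((ω_b∧ω_c)(ω_d∧ω_a)). -/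
/-- The standard area (determinant) form on `k²`: `δ(u,v) = u₀v₁ − u₁v₀`. -/
def wedge2 {k : Type*} [Field k] (u v : Fin 2 → k) : k := u 0 * v 1 - u 1 * v 0

/-- For four lines in a 2-dimensional space with consecutive lines
transverse, the composition of the canonical transport maps
`l_a → V/l_b ← l_c → V/l_d ← l_a` is multiplication by the cross ratio
`⟨l_a,l_b,l_c,l_d⟩ = δ(a,b)δ(c,d)/(δ(b,c)δ(d,a))`. -/
theorem cross_ratio_monodromy {k : Type*} [Field k] (a b c d : Fin 2 → k)
    (hcb : wedge2 c b ≠ 0) (had : wedge2 a d ≠ 0) (μ ν : k)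
    (h1 : a - μ • c ∈ Submodule.span k {b})
    (h2 : μ • c - ν • a ∈ Submodule.span k {d}) :
    ν = wedge2 a b * wedge2 c d / (wedge2 b c * wedge2 d a) := by
  obtain ⟨s, hs⟩ := Submodule.mem_span_singleton.mp h1
  obtain ⟨t, ht⟩ := Submodule.mem_span_singleton.mp h2
  have e0 := congrFun hs 0
  have e1 := congrFun hs 1
  have f0 := congrFun ht 0
  have f1 := congrFun ht 1
  simp only [Pi.smul_apply, Pi.sub_apply, smul_eq_mul] at e0 e1 f0 f1
  unfold wedge2 at *
  have key1 : a 0 * b 1 - a 1 * b 0 = μ * (c 0 * b 1 - c 1 * b 0) := by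
    linear_combination b 0 * e1 - b 1 * e0
  have key2 : μ * (c 0 * d 1 - c 1 * d 0) = ν * (a 0 * d 1 - a 1 * d 0) := by
    linear_combination d 0 * f1 - d 1 * f0
  have hbc : b 0 * c 1 - b 1 * c 0 ≠ 0 := fun h => hcb (by linear_combination -h)
  have hda : d 0 * a 1 - d 1 * a 0 ≠ 0 := fun h => had (by linear_combination -h)
  have hcb' : c 0 * b 1 - c 1 * b 0 ≠ 0 := hcb
  have had' : a 0 * d 1 - a 1 * d 0 ≠ 0 := had
  have hmu : μ = (a 0 * b 1 - a 1 * b 0) / (c 0 * b 1 - c 1 * b 0) := by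
    rw [eq_div_iff hcb']
    linear_combination -key1
  have hnu : ν = μ * (c 0 * d 1 - c 1 * d 0) / (a 0 * d 1 - a 1 * d 0) := by
    rw [eq_div_iff had']
    linear_combination -key2

  rw [eq_div_iff (mul_ne_zero hbc hda)]
  linear_combination (c 1 * d 0 - c 0 * d 1) * key1 + (b 0 * c 1 - b 1 * c 0) * key2
end

section
/- Let k be a field and a, b, c, a₁, a₂, b₁, b₂, c₁, c₂ ∈ k³. For vectors u, v, w ∈ k³ let δ(u,v,w) denote the determinant of the 3 × 3 matrix with columns u, v, w, and write δ(A,w) = δ(a₁,a₂,w), δ(B,w) = δ(b₁,b₂,w), δ(C,w) = δ(c₁,c₂,w). Assume δ(B,c) ≠ 0, δ(A,b) ≠ 0, and δ(C,a) ≠ 0. Suppose μ, κ, τ ∈ k satisfy a − μ·c ∈ span{b₁,b₂}, c − κ·b ∈ span{a₁,a₂}, and b − τ·a ∈ span{c₁,c₂}. Then μ·κ·τ = (δ(B,a)·δ(A,c)·δ(C,b)) / (δ(B,c)·δ(A,b)·δ(C,a)). In other words, the microlocal monodromy around a Y-cycle equals the triple ratio ((ω_B∧ω_a)(ω_C∧ω_b)(ω_A∧ω_c))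 / ((ω_B∧ω_c)(ω_C∧ω_a)(ω_A∧ω_b)) of the three flags (l_a ⊂ l_A), (l_b ⊂ l_B), (l_c ⊂ l_C). -/
/-- The standard volume form on `k³`: `δ(u,v,w)` is the determinant of the `3 × 3`
matrix with columns `u`, `v`, `w`. -/
def wedge3 {k : Type*} [Field k] (u v w : Fin 3 → k) : k :=
  (Matrix.of fun i j : Fin 3 => ![u, v, w] j i).det

lemma wedge3_span {k : Type*} [Field k] (u v x y : Fin 3 → k) (m : k)
    (h : x - m • y ∈ Submodule.span k {u, v}) :
    wedge3 u v x = m * wedge3 u v y := by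
  obtain ⟨s, t, hst⟩ := Submodule.mem_span_pair.mp h
  have hx : x = s • u + t • v + m • y := (eq_sub_iff_add_eq.mp hst).symm
  subst hx
  simp [wedge3, Matrix.det_fin_three, Matrix.of_apply, Matrix.cons_val_zero,
    Matrix.cons_val_one, Matrix.head_cons, Matrix.cons_val_two, Matrix.tail_cons,
    Pi.add_apply, Pi.smul_apply, smul_eq_mul, Fin.isValue]
  ring

/-- The microlocal monodromy around a Y-cycle equals the triple ratio
`(δ(B,a)δ(A,c)δ(C,b))/(δ(B,c)δ(A,b)δ(C,a))` of the three flags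
`(l_a ⊂ l_A)`, `(l_b ⊂ l_B)`, `(l_c ⊂ l_C)`. -/
theorem triple_ratio_monodromy {k : Type*} [Field k]
    (a b c a₁ a₂ b₁ b₂ c₁ c₂ : Fin 3 → k)
    (hBc : wedge3 b₁ b₂ c ≠ 0) (hAb : wedge3 a₁ a₂ b ≠ 0) (hCa : wedge3 c₁ c₂ a ≠ 0)
    (μ κ τ : k)
    (h1 : a - μ • c ∈ Submodule.span k {b₁, b₂})
    (h2 : c - κ • b ∈ Submodule.span k {a₁, a₂})
    (h3 : b - τ • a ∈ Submodule.span k {c₁, c₂}) :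
    μ * κ * τ = (wedge3 b₁ b₂ a * wedge3 a₁ a₂ c * wedge3 c₁ c₂ b)
      / (wedge3 b₁ b₂ c * wedge3 a₁ a₂ b * wedge3 c₁ c₂ a) := by
  have e1 := wedge3_span b₁ b₂ a c μ h1
  have e2 := wedge3_span a₁ a₂ c b κ h2
  have e3 := wedge3_span c₁ c₂ b a τ h3
  rw [e1, e2, e3]
  field_simp
end
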